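/- Suppose Y ⫫ X | BᵀX (conditional independence given BᵀX), E[X] = 0, Var(X) = Σ is positive definite, and E[X | BᵀX] = Σ B (BᵀΣB)⁻¹ BᵀX (linear conditional mean). Then for any minimizer (α₀, β₀) of L_τ(α,β) = βᵀΣβ + λ E[ρ_τ(Y - α - βᵀX)] with λ > 0, the vector β₀ lies in the column space of B. -/

import Mathlib

open MeasureTheory ProbabilityTheory Matrix

/-- The asymmetric least squares (expectile) loss. -/
noncomputable def alsLoss (τ c : ℝ) : ℝ :=
  τ * (max c 0) ^ 2 + (1 - τ) * (max (-c) 0) ^ 2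

lemma pals_pos_sq (a b : ℝ) : max b 0 ^ 2 + 2 * max b 0 * (a - b) ≤ max a 0 ^ 2 := by
  have h1 : max b 0 * (max b 0 - b) = 0 := by
    rcases le_total b 0 with h | h
    · simp [max_eq_right h]
    · simp [max_eq_left h]
  nlinarith [sq_nonneg (max a 0 - max b 0), le_max_left a 0, le_max_right a 0,
    le_max_right b 0, mul_nonneg (le_max_right b 0) (sub_nonneg.2 (le_max_left a 0))]

lemma pals_subgrad (τ a b : ℝ) (h0 : 0 ≤ τ) (h1 : τ ≤ 1) :
    alsLoss τ b + (2 * τ * max b 0 - 2 * (1 - τ) * max (-b) 0) * (a - b) ≤ alsLoss τ a := by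
  have hp := pals_pos_sq a b
  have hn := pals_pos_sq (-a) (-b)
  unfold alsLoss
  nlinarith [mul_le_mul_of_nonneg_left hp h0, mul_le_mul_of_nonneg_left hn (by linarith : (0:ℝ) ≤ 1 - τ)]

lemma pals_loss_bound (τ c : ℝ) (h0 : 0 ≤ τ) (h1 : τ ≤ 1) : ‖alsLoss τ c‖ ≤ c ^ 2 := by
  have h2 : max c 0 ^ 2 ≤ c ^ 2 := by
    rcases le_total c 0 with h | h
    · simp [max_eq_right h, sq_nonneg]
    · simp [max_eq_left h]
  have h3 : max (-c) 0 ^ 2 ≤ c ^ 2 := by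
    rcases le_total c 0 with h | h
    · rw [max_eq_left (by linarith : (0:ℝ) ≤ -c)]; nlinarith
    · rw [max_eq_right (by linarith : -c ≤ (0:ℝ))]; nlinarith [sq_nonneg c]
  rw [Real.norm_eq_abs]
  unfold alsLoss
  rw [abs_of_nonneg (add_nonneg (mul_nonneg h0 (sq_nonneg _)) (mul_nonneg (by linarith) (sq_nonneg _)))]
  nlinarith [mul_le_mul_of_nonneg_left h2 h0, mul_le_mul_of_nonneg_left h3 (by linarith : (0:ℝ) ≤ 1 - τ)]

lemma pals_grad_bound (τ c : ℝ) (h0 : 0 ≤ τ) (h1 : τ ≤ 1) :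
    ‖2 * τ * max c 0 - 2 * (1 - τ) * max (-c) 0‖ ≤ ‖2 * c‖ := by
  rcases le_total c 0 with h | h
  · rw [max_eq_right h, max_eq_left (by linarith), Real.norm_eq_abs, Real.norm_eq_abs]
    rw [abs_of_nonpos (by nlinarith), abs_of_nonpos (by linarith)]
    nlinarith
  · rw [max_eq_left h, max_eq_right (by linarith), Real.norm_eq_abs, Real.norm_eq_abs]
    rw [abs_of_nonneg (by nlinarith), abs_of_nonneg (by linarith)]
    nlinarith

lemma pals_integrable_mul {Ω : Type*} {mΩ : MeasurableSpace Ω} {μ : Measure Ω}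
    {f g : Ω → ℝ} (hf : MemLp f 2 μ) (hg : MemLp g 2 μ) :
    Integrable (fun ω => f ω * g ω) μ := by
  refine ((hf.integrable_sq.add hg.integrable_sq).const_mul (1/2 : ℝ)).mono'
    (hf.aestronglyMeasurable.mul hg.aestronglyMeasurable) ?_
  filter_upwards with ω
  rw [Real.norm_eq_abs, abs_mul]
  simp only [Pi.add_apply]
  have := sq_nonneg (|f ω| - |g ω|)
  have e1 : |f ω| ^ 2 = f ω ^ 2 := sq_abs _
  have e2 : |g ω| ^ 2 = g ω ^ 2 := sq_abs _
  nlinarith [abs_nonneg (f ω), abs_nonneg (g ω)]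

lemma pals_integral_mul_eq_zero
    {Ω : Type*} {mΩ : MeasurableSpace Ω} [StandardBorelSpace Ω]
    (μ : Measure Ω) [IsProbabilityMeasure μ]
    {γ δ : Type*} [MeasurableSpace γ] [MeasurableSpace δ]
    {X : Ω → γ} {T : Ω → δ} {Y : Ω → ℝ}
    (hXmeas : Measurable X) (hTmeas : Measurable T) (hYmeas : Measurable Y)
    (hTX : MeasurableSpace.comap T inferInstance ≤ MeasurableSpace.comap X inferInstance)
    (hle : MeasurableSpace.comap T inferInstance ≤ mΩ)
    (hCI : CondIndepFun (MeasurableSpace.comap T inferInstance) hle Y X μ)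
    {h : Ω → ℝ} (hh2 : MemLp h 2 μ)
    (hhX : Measurable[MeasurableSpace.comap X inferInstance] h)
    (hcond : μ[h | MeasurableSpace.comap T inferInstance] =ᵐ[μ] 0)
    (hint0 : ∫ ω, h ω ∂μ = 0)
    {G : Ω → ℝ} (hG2 : MemLp G 2 μ)
    (hGmeas : Measurable[MeasurableSpace.comap T inferInstance ⊔
      MeasurableSpace.comap Y inferInstance] G) :
    ∫ ω, G ω * h ω ∂μ = 0 := by
  have hXle : MeasurableSpace.comap X inferInstance ≤ mΩ := hXmeas.comap_le
  have hGle : MeasurableSpace.comap T inferInstance ⊔ MeasurableSpace.comap Y inferInstance ≤ mΩ :=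
    sup_le hle hYmeas.comap_le
  have hh_int : Integrable h μ := hh2.integrable one_le_two
  haveI : SigmaFinite (μ.trim hle) := by infer_instance
  haveI : SigmaFinite (μ.trim hXle) := by infer_instance
  haveI : SigmaFinite (μ.trim hGle) := by infer_instance
  have hCIfact := (condIndepFun_iff_condExp_inter_preimage_eq_mul hYmeas hXmeas).mp hCI
  -- Step 1 : E[1_A(Y) | σ(X)] = E[1_A(Y) | σ(T)]
  have step1 : ∀ A : Set ℝ, MeasurableSet A →
      (μ[(Y ⁻¹' A).indicator (fun _ => (1:ℝ)) | MeasurableSpace.comap T inferInstance]) =ᵐ[μ]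
        μ[(Y ⁻¹' A).indicator (fun _ => (1:ℝ)) | MeasurableSpace.comap X inferInstance] := by
    intro A hA
    set f : Ω → ℝ := (Y ⁻¹' A).indicator (fun _ => (1:ℝ)) with hfdef
    have hf_int : Integrable f μ := (integrable_const (1:ℝ)).indicator (hYmeas hA)
    set F := μ[f | MeasurableSpace.comap T inferInstance] with hFdef
    have hFsm : StronglyMeasurable[MeasurableSpace.comap T inferInstance] F := stronglyMeasurable_condExp
    have hF_int : Integrable F μ := integrable_condExp
    have hFbdd : ∀ᵐ x ∂μ, ‖F x‖ ≤ (1:ℝ) := by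
      have hb : ∀ᵐ x ∂μ, |f x| ≤ ((1 : NNReal) : ℝ) := by
        filter_upwards with x
        by_cases hx : x ∈ Y ⁻¹' A <;> simp [hfdef, Set.indicator_apply, hx]
      filter_upwards [ae_bdd_condExp_of_ae_bdd hb] with x hx
      simpa using hx
    refine ae_eq_condExp_of_forall_setIntegral_eq hXle hf_int
      (fun s _ _ => hF_int.integrableOn) ?_
      (hFsm.mono hTX).aestronglyMeasurable
    intro s hs _hμs
    obtain ⟨t, ht, rfl⟩ := MeasurableSpace.measurableSet_comap.mp hs
    set g1 : Ω → ℝ := (X ⁻¹' t).indicator (fun _ => (1:ℝ)) with hg1def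
    have hg1_int : Integrable g1 μ := (integrable_const (1:ℝ)).indicator (hXmeas ht)
    have hFg1_int : Integrable (F * g1) μ := by
      have := hg1_int.bdd_mul (c := 1) (hF_int.aestronglyMeasurable) hFbdd
      exact this
    calc ∫ x in X ⁻¹' t, F x ∂μ
        = ∫ x, (F * g1) x ∂μ := by
          rw [← integral_indicator (hXmeas ht)]
          congr 1; ext x
          by_cases hx : x ∈ X ⁻¹' t <;>
            simp [hg1def, Set.indicator_apply, hx]
      _ = ∫ x, (μ[F * g1 | MeasurableSpace.comap T inferInstance]) x ∂μ := (integral_condExp hle).symm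
      _ = ∫ x, (F x * (μ[g1 | MeasurableSpace.comap T inferInstance]) x) ∂μ := by
          refine integral_congr_ae ?_
          filter_upwards [condExp_mul_of_stronglyMeasurable_left hFsm hFg1_int hg1_int] with x hx
          simpa using hx
      _ = ∫ x, ((Y ⁻¹' A ∩ X ⁻¹' t).indicator (fun _ => (1:ℝ))) x ∂μ := by
          rw [← integral_condExp hle
            (f := (Y ⁻¹' A ∩ X ⁻¹' t).indicator (fun _ => (1:ℝ)))]
          refine integral_congr_ae ?_
          filter_upwards [hCIfact A t hA ht] with x hx
          rw [hx]
      _ = ∫ x in X ⁻¹' t, f x ∂μ := by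
          rw [← integral_indicator (hXmeas ht)]
          congr 1; ext x
          by_cases hx1 : x ∈ Y ⁻¹' A <;> by_cases hx2 : x ∈ X ⁻¹' t <;>
            simp [hfdef, Set.indicator_apply, hx1, hx2]
  -- Step 2 : rectangles
  have step2 : ∀ C : Set δ, MeasurableSet C → ∀ A : Set ℝ, MeasurableSet A →
      ∫ x in T ⁻¹' C ∩ Y ⁻¹' A, h x ∂μ = 0 := by
    intro C hC A hA
    have hTCmT : MeasurableSet[MeasurableSpace.comap T inferInstance] (T ⁻¹' C) := MeasurableSpace.measurableSet_comap.mpr ⟨C, hC, rfl⟩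
    set k : Ω → ℝ := (T ⁻¹' C).indicator h with hkdef
    set f : Ω → ℝ := (Y ⁻¹' A).indicator (fun _ => (1:ℝ)) with hfdef
    have hf_int : Integrable f μ := (integrable_const (1:ℝ)).indicator (hYmeas hA)
    set F := μ[f | MeasurableSpace.comap T inferInstance] with hFdef
    have hFsm : StronglyMeasurable[MeasurableSpace.comap T inferInstance] F := stronglyMeasurable_condExp
    have hF_int : Integrable F μ := integrable_condExp
    have hFbdd : ∀ᵐ x ∂μ, ‖F x‖ ≤ (1:ℝ) := by
      have hb : ∀ᵐ x ∂μ, |f x| ≤ ((1 : NNReal) : ℝ) := by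
        filter_upwards with x
        by_cases hx : x ∈ Y ⁻¹' A <;> simp [hfdef, Set.indicator_apply, hx]
      filter_upwards [ae_bdd_condExp_of_ae_bdd hb] with x hx
      simpa using hx
    have hk_int : Integrable k μ := hh_int.indicator (hle _ hTCmT)
    have hkSM : StronglyMeasurable[MeasurableSpace.comap X inferInstance] k :=
      (hhX.indicator (hTX _ hTCmT)).stronglyMeasurable
    have hkf_int : Integrable (k * f) μ := by
      have hfb : ∀ᵐ x ∂μ, ‖f x‖ ≤ (1:ℝ) := by
        filter_upwards with x
        by_cases hx : x ∈ Y ⁻¹' A <;> simp [hfdef, Set.indicator_apply, hx]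
      have := hk_int.bdd_mul (c := 1) hf_int.aestronglyMeasurable hfb
      exact this.congr (by filter_upwards with x using mul_comm _ _)
    have hFk_int : Integrable (F * k) μ := by
      have := hk_int.bdd_mul (c := 1) hF_int.aestronglyMeasurable hFbdd
      exact this
    have hcondk : (μ[k | MeasurableSpace.comap T inferInstance]) =ᵐ[μ] 0 := by
      filter_upwards [condExp_indicator hh_int hTCmT, hcond] with x hx1 hx2
      rw [hx1]
      by_cases hx : x ∈ T ⁻¹' C <;> simp [Set.indicator_apply, hx, hx2]
    calc ∫ x in T ⁻¹' C ∩ Y ⁻¹' A, h x ∂μ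
        = ∫ x, (k * f) x ∂μ := by
          rw [← integral_indicator ((hle _ hTCmT).inter (hYmeas hA))]
          congr 1; ext x
          by_cases hx1 : x ∈ T ⁻¹' C <;> by_cases hx2 : x ∈ Y ⁻¹' A <;>
            simp [hkdef, hfdef, Set.indicator_apply, hx1, hx2]
      _ = ∫ x, (μ[k * f | MeasurableSpace.comap X inferInstance]) x ∂μ := (integral_condExp hXle).symm
      _ = ∫ x, (k x * F x) ∂μ := by
          refine integral_congr_ae ?_
          filter_upwards [condExp_mul_of_stronglyMeasurable_left hkSM hkf_int hf_int,
            step1 A hA] with x hx1 hx2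
          simp only [hx1, Pi.mul_apply]
          rw [hFdef, hx2]
      _ = ∫ x, (μ[F * k | MeasurableSpace.comap T inferInstance]) x ∂μ := by
          rw [integral_condExp hle]
          exact integral_congr_ae (by filter_upwards with x using mul_comm _ _)
      _ = ∫ x, (F * μ[k | MeasurableSpace.comap T inferInstance]) x ∂μ :=
          integral_congr_ae (condExp_mul_of_stronglyMeasurable_left hFsm hFk_int hk_int)
      _ = 0 := by
          refine integral_eq_zero_of_ae ?_
          filter_upwards [hcondk] with x hx
          simp [hx]
  -- Step 3 : all sets in the pair σ-algebra
  have hpair_meas : Measurable (fun ω => (T ω, Y ω)) := hTmeas.prodMk hYmeas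
  have step3 : ∀ D : Set (δ × ℝ), MeasurableSet D →
      ∫ x in (fun ω => (T ω, Y ω)) ⁻¹' D, h x ∂μ = 0 := by
    intro D hD
    refine MeasurableSpace.induction_on_inter
      (C := fun D _ => ∫ x in (fun ω => (T ω, Y ω)) ⁻¹' D, h x ∂μ = 0)
      generateFrom_prod.symm isPiSystem_prod ?_ ?_ ?_ ?_ _ hD
    · simp
    · rintro t ⟨C, hC, A, hA, rfl⟩
      rw [Set.mk_preimage_prod]
      exact step2 C hC A hA
    · intro t ht h0
      have hmeas : MeasurableSet ((fun ω => (T ω, Y ω)) ⁻¹' t) := hpair_meas ht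
      have hadd := integral_add_compl hmeas hh_int
      rw [Set.preimage_compl]
      rw [h0, hint0] at hadd
      linarith
    · intro g hdis hmeas hind
      rw [Set.preimage_iUnion, integral_iUnion (fun i => hpair_meas (hmeas i))
        (fun i j hij => (hdis hij).preimage _) hh_int.integrableOn]
      simp [hind]
  -- Step 4 : condexp wrt the join σ-algebra vanishes
  have hsub : MeasurableSpace.comap T inferInstance ⊔ MeasurableSpace.comap Y inferInstance ≤
      MeasurableSpace.comap (fun ω => (T ω, Y ω)) inferInstance := by
    refine sup_le ?_ ?_
    · have e : MeasurableSpace.comap T inferInstance =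
          (MeasurableSpace.comap Prod.fst inferInstance).comap (fun ω => (T ω, Y ω)) := by
        rw [MeasurableSpace.comap_comp]; rfl
      rw [e]
      exact MeasurableSpace.comap_mono measurable_fst.comap_le
    · have e : MeasurableSpace.comap Y inferInstance =
          (MeasurableSpace.comap Prod.snd inferInstance).comap (fun ω => (T ω, Y ω)) := by
        rw [MeasurableSpace.comap_comp]; rfl
      rw [e]
      exact MeasurableSpace.comap_mono measurable_snd.comap_le
  have hcondG : μ[h | MeasurableSpace.comap T inferInstance ⊔ MeasurableSpace.comap Y inferInstance]
      =ᵐ[μ] 0 := by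
    refine (ae_eq_condExp_of_forall_setIntegral_eq hGle hh_int
      (fun s _ _ => (integrable_zero _ _ _).integrableOn) ?_ ?_).symm
    · intro s hs _hμs
      obtain ⟨D, hD, rfl⟩ := MeasurableSpace.measurableSet_comap.mp (hsub s hs)
      simp only [Pi.zero_apply, integral_zero]
      exact (step3 D hD).symm
    · exact ⟨0, @stronglyMeasurable_zero Ω ℝ (MeasurableSpace.comap T inferInstance ⊔
        MeasurableSpace.comap Y inferInstance) _ _, Filter.EventuallyEq.rfl⟩
  -- Step 5 : conclude
  have hGh_int : Integrable (G * h) μ := pals_integrable_mul hG2 hh2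
  have hGsm : StronglyMeasurable[MeasurableSpace.comap T inferInstance ⊔
      MeasurableSpace.comap Y inferInstance] G := hGmeas.stronglyMeasurable
  have e0 : (fun ω => G ω * h ω) = G * h := rfl
  rw [e0, ← integral_condExp hGle]
  refine integral_eq_zero_of_ae ?_
  filter_upwards [condExp_mul_of_stronglyMeasurable_left hGsm hGh_int hh_int, hcondG] with x hx1 hx2
  rw [hx1, Pi.mul_apply, hx2]
  simp

/-- Theorem 1 (population PALS): under conditional independence `Y ⫫ X | BᵀX`,
centered `X` with positive definite covariance `Σ`, and the linear conditional
mean condition `E[X|BᵀX] = ΣB(BᵀΣB)⁻¹BᵀX`, the `β`-component of any minimizer of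
`L_τ(α,β) = βᵀΣβ + λ E[ρ_τ(Y - α - βᵀX)]` lies in the column space of `B`. -/
theorem stmt_11 {Ω : Type*} {mΩ : MeasurableSpace Ω} [StandardBorelSpace Ω]
    (μ : Measure Ω) [IsProbabilityMeasure μ]
    (p d : ℕ) (X : Ω → Fin p → ℝ) (Y : Ω → ℝ)
    (hXmeas : Measurable X) (hYmeas : Measurable Y)
    (hX2 : MemLp X 2 μ) (hY2 : MemLp Y 2 μ)
    (hXmean : ∀ i, ∫ ω, X ω i ∂μ = 0)
    (S : Matrix (Fin p) (Fin p) ℝ)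
    (hS : ∀ i j, S i j = ∫ ω, X ω i * X ω j ∂μ)
    (hSpd : S.PosDef)
    (B : Matrix (Fin p) (Fin d) ℝ)
    (hBSB : IsUnit (B.transpose * S * B).det)
    (hle : MeasurableSpace.comap (fun ω => B.transpose.mulVec (X ω)) inferInstance ≤ mΩ)
    (hCI : CondIndepFun
      (MeasurableSpace.comap (fun ω => B.transpose.mulVec (X ω)) inferInstance) hle Y X μ)
    (hLCM : ∀ i,
      (μ[fun ω => X ω i |
          MeasurableSpace.comap (fun ω => B.transpose.mulVec (X ω)) inferInstance])
        =ᵐ[μ] fun ω => (S * B * (B.transpose * S * B)⁻¹ * B.transpose).mulVec (X ω) i)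
    (τ lam : ℝ) (hτ : τ ∈ Set.Ioo (0:ℝ) 1) (hlam : 0 < lam)
    (α₀ : ℝ) (β₀ : Fin p → ℝ)
    (hmin : ∀ (α : ℝ) (β : Fin p → ℝ),
      β₀ ⬝ᵥ S.mulVec β₀ + lam * ∫ ω, alsLoss τ (Y ω - α₀ - β₀ ⬝ᵥ X ω) ∂μ ≤
        β ⬝ᵥ S.mulVec β + lam * ∫ ω, alsLoss τ (Y ω - α - β ⬝ᵥ X ω) ∂μ) :
    ∃ c : Fin d → ℝ, β₀ = B.mulVec c := by
  obtain ⟨hτ0, hτ1⟩ := hτ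
  -- continuity of linear maps
  have hdotc : ∀ (n : ℕ) (w : Fin n → ℝ), Continuous (fun x : Fin n → ℝ => w ⬝ᵥ x) := by
    intro n w
    have e : (fun x : Fin n → ℝ => w ⬝ᵥ x) = fun x => ∑ i, w i * x i := rfl
    rw [e]
    exact continuous_finset_sum _ fun i _ => continuous_const.mul (continuous_apply i)
  have hmvc : Continuous (fun x : Fin p → ℝ => B.transpose.mulVec x) := by
    apply continuous_pi
    intro j
    exact hdotc p (B.transpose j)
  set T : Ω → Fin d → ℝ := fun ω => B.transpose.mulVec (X ω) with hTdef
  have hTmeas : Measurable T := hmvc.measurable.comp hXmeas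
  have hTX : MeasurableSpace.comap T inferInstance ≤ MeasurableSpace.comap X inferInstance := by
    have e : MeasurableSpace.comap T inferInstance =
        (MeasurableSpace.comap (fun x : Fin p → ℝ => B.transpose.mulVec x) inferInstance).comap
          X := by
      rw [MeasurableSpace.comap_comp]; rfl
    rw [e]
    exact MeasurableSpace.comap_mono hmvc.measurable.comap_le
  -- matrix algebra
  have hSsym : S.transpose = S := by
    ext i j
    rw [Matrix.transpose_apply, hS, hS]
    simp_rw [mul_comm]
  have hMsym : (B.transpose * S * B).transpose = B.transpose * S * B := by
    rw [Matrix.transpose_mul, Matrix.transpose_mul, Matrix.transpose_transpose, hSsym,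
      ← Matrix.mul_assoc]
  set cv : Fin d → ℝ := ((B.transpose * S * B)⁻¹ * B.transpose * S).mulVec β₀ with hcdef
  set βt : Fin p → ℝ := B.mulVec cv with hβtdef
  set v : Fin p → ℝ := βt - β₀ with hvdef
  have key1 : (B.transpose * S).mulVec v = 0 := by
    have h1 : (B.transpose * S).mulVec βt = (B.transpose * S).mulVec β₀ := by
      rw [hβtdef, Matrix.mulVec_mulVec, hcdef, Matrix.mulVec_mulVec]
      simp only [← Matrix.mul_assoc]
      rw [Matrix.mul_nonsing_inv _ hBSB, Matrix.one_mul]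
    rw [hvdef, Matrix.mulVec_sub, h1, sub_self]
  have hsymdot : ∀ x y : Fin p → ℝ, x ⬝ᵥ S.mulVec y = y ⬝ᵥ S.mulVec x := by
    intro x y
    rw [Matrix.dotProduct_mulVec, ← Matrix.mulVec_transpose, hSsym, dotProduct_comm]
  have hbtv : βt ⬝ᵥ S.mulVec v = 0 := by
    calc βt ⬝ᵥ S.mulVec v = (cv ᵥ* B.transpose) ⬝ᵥ S.mulVec v := by
          rw [Matrix.vecMul_transpose, hβtdef]
      _ = cv ⬝ᵥ B.transpose.mulVec (S.mulVec v) := (Matrix.dotProduct_mulVec _ _ _).symm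
      _ = cv ⬝ᵥ (B.transpose * S).mulVec v := by rw [Matrix.mulVec_mulVec]
      _ = 0 := by rw [key1, dotProduct_zero]
  have hQ : β₀ ⬝ᵥ S.mulVec β₀ = βt ⬝ᵥ S.mulVec βt + v ⬝ᵥ S.mulVec v := by
    have hβ0 : β₀ = βt - v := by rw [hvdef, sub_sub_cancel]
    nth_rewrite 1 [hβ0]
    nth_rewrite 1 [hβ0]
    rw [Matrix.mulVec_sub, sub_dotProduct, dotProduct_sub, dotProduct_sub]
    have h2 := hsymdot v βt
    linarith [hbtv, h2]
  have hPtEq : (S * B * (B.transpose * S * B)⁻¹ * B.transpose).transpose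
      = B * (B.transpose * S * B)⁻¹ * B.transpose * S := by
    simp only [Matrix.transpose_mul, Matrix.transpose_transpose, Matrix.transpose_nonsing_inv,
      hMsym, hSsym, Matrix.mul_assoc]
  have hA : (B * (B.transpose * S * B)⁻¹ * B.transpose * S).mulVec v = 0 := by
    have h1 : (B * (B.transpose * S * B)⁻¹ * B.transpose * S).mulVec βt = βt := by
      have e1 : B * (B.transpose * S * B)⁻¹ * B.transpose * S * B = B := by
        calc B * (B.transpose * S * B)⁻¹ * B.transpose * S * B
            = B * ((B.transpose * S * B)⁻¹ * (B.transpose * S * B)) := by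
              simp only [Matrix.mul_assoc]
          _ = B := by rw [Matrix.nonsing_inv_mul _ hBSB, Matrix.mul_one]
      rw [hβtdef, Matrix.mulVec_mulVec, e1]
    have h2 : (B * (B.transpose * S * B)⁻¹ * B.transpose * S).mulVec β₀ = βt := by
      rw [hβtdef, hcdef, Matrix.mulVec_mulVec]
      simp only [Matrix.mul_assoc]
    rw [hvdef, Matrix.mulVec_sub, h1, h2, sub_self]
  have key2 : ∀ x : Fin p → ℝ,
      v ⬝ᵥ (S * B * (B.transpose * S * B)⁻¹ * B.transpose).mulVec x = 0 := by
    intro x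
    rw [Matrix.dotProduct_mulVec, ← Matrix.mulVec_transpose, hPtEq, hA, zero_dotProduct]
  -- integrability infrastructure
  have hXi_m : ∀ i, Measurable (fun ω => X ω i) := fun i => (measurable_pi_apply i).comp hXmeas
  have hXi2 : ∀ i, MemLp (fun ω => X ω i) 2 μ := by
    intro i
    exact hX2.of_le (hXi_m i).aestronglyMeasurable
      (Filter.Eventually.of_forall fun ω => norm_le_pi_norm (X ω) i)
  have hXi_int : ∀ i, Integrable (fun ω => X ω i) μ := fun i => (hXi2 i).integrable one_le_two
  have hdotm : ∀ w : Fin p → ℝ, Measurable (fun ω => w ⬝ᵥ X ω) :=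
    fun w => (hdotc p w).measurable.comp hXmeas
  have hdotmem : ∀ w : Fin p → ℝ, MemLp (fun ω => w ⬝ᵥ X ω) 2 μ := by
    intro w
    have e : (fun ω => w ⬝ᵥ X ω) = fun ω => ∑ i, w i * X ω i := rfl
    rw [e]
    exact memLp_finset_sum _ fun i _ => (hXi2 i).const_mul (w i)
  have hdot_int : ∀ w : Fin p → ℝ, Integrable (fun ω => w ⬝ᵥ X ω) μ :=
    fun w => (hdotmem w).integrable one_le_two
  have hdotmean : ∀ w : Fin p → ℝ, ∫ ω, w ⬝ᵥ X ω ∂μ = 0 := by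
    intro w
    have e : (fun ω => w ⬝ᵥ X ω) = fun ω => ∑ i, w i * X ω i := rfl
    rw [e, integral_finset_sum _ fun i _ => (hXi_int i).const_mul (w i)]
    simp_rw [integral_const_mul]
    simp [hXmean]
  -- conditional expectation of v ⬝ᵥ X given T is 0
  have hcond : μ[(fun ω => v ⬝ᵥ X ω) | MeasurableSpace.comap T inferInstance] =ᵐ[μ] 0 := by
    have hsum : (fun ω => v ⬝ᵥ X ω) = ∑ i : Fin p, v i • (fun ω => X ω i) := by
      funext ω
      simp [dotProduct, Finset.sum_apply]
    have h1 : μ[(fun ω => v ⬝ᵥ X ω) | MeasurableSpace.comap T inferInstance] =ᵐ[μ]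
        ∑ i : Fin p, μ[v i • (fun ω => X ω i) | MeasurableSpace.comap T inferInstance] := by
      rw [hsum]
      exact condExp_finsetSum (fun i _ => ((hXi_int i).smul (v i))) _
    have h2 : ∀ᵐ ω ∂μ, ∀ i, (μ[v i • (fun ω => X ω i) |
        MeasurableSpace.comap T inferInstance]) ω =
        v i • (μ[(fun ω => X ω i) | MeasurableSpace.comap T inferInstance]) ω := by
      refine ae_all_iff.mpr fun i => ?_
      filter_upwards [condExp_smul (m := MeasurableSpace.comap T inferInstance) (v i)
        (fun ω => X ω i)] with ω hω
      simpa using hω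
    have h3 : ∀ᵐ ω ∂μ, ∀ i, (μ[(fun ω => X ω i) |
        MeasurableSpace.comap T inferInstance]) ω =
        (S * B * (B.transpose * S * B)⁻¹ * B.transpose).mulVec (X ω) i :=
      ae_all_iff.mpr hLCM
    filter_upwards [h1, h2, h3] with ω hω1 hω2 hω3
    rw [hω1, Finset.sum_apply]
    have : ∀ i : Fin p, (μ[v i • (fun ω => X ω i) |
        MeasurableSpace.comap T inferInstance]) ω =
        v i * (S * B * (B.transpose * S * B)⁻¹ * B.transpose).mulVec (X ω) i := by
      intro i
      rw [hω2 i, hω3 i, smul_eq_mul]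
    rw [Finset.sum_congr rfl fun i _ => this i]
    have e : ∑ i : Fin p, v i * (S * B * (B.transpose * S * B)⁻¹ * B.transpose).mulVec (X ω) i
        = v ⬝ᵥ (S * B * (B.transpose * S * B)⁻¹ * B.transpose).mulVec (X ω) := rfl
    rw [e, key2]
    rfl
  have hhX : Measurable[MeasurableSpace.comap X inferInstance] (fun ω => v ⬝ᵥ X ω) := by
    have hXcm : Measurable[MeasurableSpace.comap X inferInstance] X :=
      Measurable.of_comap_le le_rfl
    exact (hdotc p v).measurable.comp hXcm
  -- the gradient factor G
  set G : Ω → ℝ := fun ω => 2 * τ * max (Y ω - α₀ - βt ⬝ᵥ X ω) 0 -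
      2 * (1 - τ) * max (-(Y ω - α₀ - βt ⬝ᵥ X ω)) 0 with hGdef
  have hdotBT : ∀ x : Fin p → ℝ, B.mulVec cv ⬝ᵥ x = cv ⬝ᵥ B.transpose.mulVec x := by
    intro x
    rw [Matrix.dotProduct_mulVec, Matrix.vecMul_transpose]
  have hZmeasΩ : Measurable (fun ω => Y ω - α₀ - βt ⬝ᵥ X ω) :=
    (hYmeas.sub measurable_const).sub (hdotm βt)
  have hGmeasΩ : Measurable G := by
    rw [hGdef]
    exact ((hZmeasΩ.max measurable_const).const_mul (2 * τ)).sub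
      ((hZmeasΩ.neg.max measurable_const).const_mul (2 * (1 - τ)))
  have hGmeasJ : Measurable[MeasurableSpace.comap T inferInstance ⊔
      MeasurableSpace.comap Y inferInstance] G := by
    have hYJ : Measurable[MeasurableSpace.comap T inferInstance ⊔
        MeasurableSpace.comap Y inferInstance] Y := Measurable.of_comap_le le_sup_right
    have hTJ : Measurable[MeasurableSpace.comap T inferInstance ⊔
        MeasurableSpace.comap Y inferInstance] T := Measurable.of_comap_le le_sup_left
    have hW : Measurable[MeasurableSpace.comap T inferInstance ⊔
        MeasurableSpace.comap Y inferInstance] (fun ω => βt ⬝ᵥ X ω) := by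
      have e : (fun ω => βt ⬝ᵥ X ω) = fun ω => cv ⬝ᵥ T ω := by
        funext ω
        rw [hβtdef, hTdef]
        exact hdotBT (X ω)
      rw [e]
      exact (hdotc d cv).measurable.comp hTJ
    have hZ : Measurable[MeasurableSpace.comap T inferInstance ⊔
        MeasurableSpace.comap Y inferInstance] (fun ω => Y ω - α₀ - βt ⬝ᵥ X ω) :=
      (hYJ.sub measurable_const).sub hW
    rw [hGdef]
    exact ((hZ.max measurable_const).const_mul (2 * τ)).sub
      ((hZ.neg.max measurable_const).const_mul (2 * (1 - τ)))
  have hZ2 : MemLp (fun ω => Y ω - α₀ - βt ⬝ᵥ X ω) 2 μ :=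
    (hY2.sub (memLp_const α₀)).sub (hdotmem βt)
  have hG2 : MemLp G 2 μ := by
    refine (hZ2.const_mul 2).of_le hGmeasΩ.aestronglyMeasurable ?_
    filter_upwards with ω
    exact pals_grad_bound τ _ hτ0.le hτ1.le
  -- loss integrability
  have hloss_int : ∀ (α : ℝ) (β : Fin p → ℝ),
      Integrable (fun ω => alsLoss τ (Y ω - α - β ⬝ᵥ X ω)) μ := by
    intro α β
    have hZm : Measurable (fun ω => Y ω - α - β ⬝ᵥ X ω) :=
      (hYmeas.sub measurable_const).sub (hdotm β)
    have hZ2' : MemLp (fun ω => Y ω - α - β ⬝ᵥ X ω) 2 μ :=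
      (hY2.sub (memLp_const α)).sub (hdotmem β)
    have hsm : Measurable (fun ω => alsLoss τ (Y ω - α - β ⬝ᵥ X ω)) := by
      unfold alsLoss
      exact (((hZm.max measurable_const).pow_const 2).const_mul τ).add
        (((hZm.neg.max measurable_const).pow_const 2).const_mul (1 - τ))
    refine hZ2'.integrable_sq.mono' hsm.aestronglyMeasurable ?_
    filter_upwards with ω
    exact pals_loss_bound τ _ hτ0.le hτ1.le
  -- the key vanishing integral
  have hGh0 : ∫ ω, G ω * (v ⬝ᵥ X ω) ∂μ = 0 :=
    pals_integral_mul_eq_zero μ hXmeas hTmeas hYmeas hTX hle hCI (hdotmem v) hhX hcond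
      (hdotmean v) hG2 hGmeasJ
  have hGh_int : Integrable (fun ω => G ω * (v ⬝ᵥ X ω)) μ :=
    pals_integrable_mul hG2 (hdotmem v)
  -- pointwise convexity inequality
  have hptwise : ∀ ω, alsLoss τ (Y ω - α₀ - βt ⬝ᵥ X ω) + G ω * (v ⬝ᵥ X ω) ≤
      alsLoss τ (Y ω - α₀ - β₀ ⬝ᵥ X ω) := by
    intro ω
    have hab : (Y ω - α₀ - β₀ ⬝ᵥ X ω) - (Y ω - α₀ - βt ⬝ᵥ X ω) = v ⬝ᵥ X ω := by
      rw [hvdef, sub_dotProduct]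
      ring
    have hsg := pals_subgrad τ (Y ω - α₀ - β₀ ⬝ᵥ X ω) (Y ω - α₀ - βt ⬝ᵥ X ω) hτ0.le hτ1.le
    rw [hab] at hsg
    exact hsg
  have hint1 : ∫ ω, (alsLoss τ (Y ω - α₀ - βt ⬝ᵥ X ω) + G ω * (v ⬝ᵥ X ω)) ∂μ ≤
      ∫ ω, alsLoss τ (Y ω - α₀ - β₀ ⬝ᵥ X ω) ∂μ :=
    integral_mono ((hloss_int α₀ βt).add hGh_int) (hloss_int α₀ β₀) hptwise
  have hsplit : ∫ ω, (alsLoss τ (Y ω - α₀ - βt ⬝ᵥ X ω) + G ω * (v ⬝ᵥ X ω)) ∂μ =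
      ∫ ω, alsLoss τ (Y ω - α₀ - βt ⬝ᵥ X ω) ∂μ := by
    rw [integral_add (hloss_int α₀ βt) hGh_int, hGh0, add_zero]
  have hle_loss : ∫ ω, alsLoss τ (Y ω - α₀ - βt ⬝ᵥ X ω) ∂μ ≤
      ∫ ω, alsLoss τ (Y ω - α₀ - β₀ ⬝ᵥ X ω) ∂μ := by
    rw [← hsplit]; exact hint1
  have hm := hmin α₀ βt
  have hQle : β₀ ⬝ᵥ S.mulVec β₀ ≤ βt ⬝ᵥ S.mulVec βt := by
    have := mul_le_mul_of_nonneg_left hle_loss hlam.le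
    linarith
  have hvSv : v ⬝ᵥ S.mulVec v ≤ 0 := by linarith
  have hv0 : v = 0 := by
    by_contra hne
    have hpos := hSpd.dotProduct_mulVec_pos hne
    have hstar : star v = v := funext fun i => star_trivial _
    rw [hstar] at hpos
    linarith
  refine ⟨cv, ?_⟩
  have h' : βt - β₀ = 0 := by rwa [hvdef] at hv0
  have h'' : βt = β₀ := sub_eq_zero.mp h'
  rw [← h'', hβtdef]
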